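/- Let E be a real inner product space, let Ω ⊆ E be a nonempty open convex set, and let F : E → E be (Fréchet) differentiable at every point of Ω. Suppose there exists a straight line L = {u + λv : λ ∈ ℝ} ⊆ E that is not orthogonal to Ω such that for every ω ∈ L the translated map x ↦ F(x) + ω is pseudomonotone on Ω. Then for every x ∈ Ω the derivative DF(x) is positive semidefinite: ⟨w, (DF(x))(w)⟩ ≥ 0 for all w ∈ E. -/

import Mathlib

open scoped RealInnerProductSpace

/-- Let `Ω` be a nonempty open convex subset of a real inner product
space `E` and `F : E → E` Fréchet differentiable at every point of `Ω` (with
derivative `f x = DF(x)`). If there exists a straight line `L = {u + λ•v}` (with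
`v ≠ 0`) not orthogonal to `Ω` such that `F + ω` is pseudomonotone on `Ω` for every
`ω ∈ L`, then `DF(x)` is positive semidefinite for every `x ∈ Ω`. -/
theorem fderiv_posSemidef_of_pseudomonotone_translations
    {E : Type*} [NormedAddCommGroup E] [InnerProductSpace ℝ E]
    (Ω : Set E) (hΩne : Ω.Nonempty) (hΩopen : IsOpen Ω) (hΩconv : Convex ℝ Ω)
    (F : E → E) (f : E → E →L[ℝ] E) (hdiff : ∀ x ∈ Ω, HasFDerivAt F (f x) x)
    (hline : ∃ u v : E, v ≠ 0 ∧ (∃ a ∈ Ω, ∃ b ∈ Ω, ⟪v, a⟫ ≠ ⟪v, b⟫) ∧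
      ∀ ω : E, (∃ l : ℝ, ω = u + l • v) →
        ∀ x ∈ Ω, ∀ y ∈ Ω, ⟪F y + ω, x - y⟫ ≥ 0 → ⟪F x + ω, x - y⟫ ≥ 0) :
    ∀ x ∈ Ω, ∀ w : E, ⟪w, f x w⟫ ≥ 0 := by
  obtain ⟨u, v, hv, -, hpm⟩ := hline
  intro x hx
  have key : ∀ w : E, ⟪v, w⟫ ≠ 0 → 0 ≤ ⟪w, f x w⟫ := by
    intro w hvw
    set l : ℝ := -⟪F x + u, w⟫ / ⟪v, w⟫ with hl
    set ω : E := u + l • v with hω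
    have hFxω : ⟪F x + ω, w⟫ = 0 := by
      rw [hω, show F x + (u + l • v) = (F x + u) + l • v by abel, inner_add_left,
        real_inner_smul_left, hl]
      field_simp
      ring
    set φ : ℝ → ℝ := fun t => ⟪w, F (x + t • w) + ω⟫ with hφ
    have hφ0 : φ 0 = 0 := by
      simp only [hφ, zero_smul, add_zero]
      rw [real_inner_comm, hFxω]
    have h1 : HasDerivAt (fun t : ℝ => x + t • w) w 0 := by
      simpa using ((hasDerivAt_id (0 : ℝ)).smul_const w).const_add x
    have h2 : HasDerivAt (fun t : ℝ => F (x + t • w)) (f x w) 0 := by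
      have hF : HasFDerivAt F (f x) ((fun t : ℝ => x + t • w) 0) := by
        simpa using hdiff x hx
      exact hF.comp_hasDerivAt 0 h1
    have h3 : HasDerivAt (fun t : ℝ => F (x + t • w) + ω) (f x w) 0 := h2.add_const ω
    have hd : HasDerivAt φ ⟪w, f x w⟫ 0 := by
      have := ((innerSL ℝ w).hasFDerivAt (x := F (x + (0:ℝ) • w) + ω)).comp_hasDerivAt 0 h3
      exact this
    rw [hasDerivAt_iff_tendsto_slope] at hd
    have hev : ∀ᶠ t in nhdsWithin (0 : ℝ) {(0:ℝ)}ᶜ, 0 ≤ slope φ 0 t := by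
      have hmem : ∀ᶠ t in nhds (0 : ℝ), x + t • w ∈ Ω := by
        have hc : Continuous fun t : ℝ => x + t • w := by continuity
        have hx0 : x + (0:ℝ) • w ∈ Ω := by simpa using hx
        exact hc.continuousAt.eventually_mem (hΩopen.mem_nhds hx0)
      filter_upwards [nhdsWithin_le_nhds hmem, self_mem_nhdsWithin] with t hmem' ht
      have ht0 : t ≠ 0 := ht
      have hsub : (x + t • w) - x = t • w := by abel
      have h4 : ⟪F (x + t • w) + ω, (x + t • w) - x⟫ ≥ 0 := by
        apply hpm ω ⟨l, rfl⟩ (x + t • w) hmem' x hx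
        rw [hsub, inner_smul_right, hFxω, mul_zero]
      rw [hsub, inner_smul_right] at h4
      have h5 : 0 ≤ t * φ t := by
        simpa [hφ, real_inner_comm] using h4
      have hslope : slope φ 0 t = φ t / t := by
        simp [slope, hφ0, inv_mul_eq_div]
      rw [hslope, ← mul_div_mul_left (φ t) t ht0]
      exact div_nonneg h5 (mul_self_nonneg t)
    exact ge_of_tendsto hd hev
  intro w
  rcases eq_or_ne ⟪v, w⟫ 0 with h0 | h0
  · have hc1 : Continuous fun ε : ℝ => w + ε • v := by continuity
    have hcont : Continuous fun ε : ℝ => ⟪w + ε • v, f x (w + ε • v)⟫ :=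
      hc1.inner ((f x).continuous.comp hc1)
    have htend : Filter.Tendsto (fun ε : ℝ => ⟪w + ε • v, f x (w + ε • v)⟫)
        (nhdsWithin (0 : ℝ) {(0:ℝ)}ᶜ) (nhds ⟪w, f x w⟫) := by
      have h := (hcont.continuousAt (x := (0:ℝ))).tendsto.mono_left
        (nhdsWithin_le_nhds (s := {(0:ℝ)}ᶜ))
      have heq : ⟪w + (0:ℝ) • v, f x (w + (0:ℝ) • v)⟫ = ⟪w, f x w⟫ := by simp
      rwa [heq] at h
    refine ge_of_tendsto htend ?_
    filter_upwards [self_mem_nhdsWithin] with ε hε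
    apply key
    rw [inner_add_right, h0, real_inner_smul_right, zero_add]
    have hvv : ⟪v, v⟫ ≠ 0 := fun h => hv (inner_self_eq_zero.mp h)
    exact mul_ne_zero hε hvv
  · exact key w h0
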